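/- Let n > m ≥ 0 and d ≥ 1 be integers, and a ∈ ℂ×. The Euclidean volume of the Newton polytope Δ(f_a) ⊂ ℝ^{n+m-1} of the Laurent polynomial f_a = ∑_{i=2}^n x_i^d − ∑_{j=1}^m y_j^d + a ∏_j y_j^d / ∏_i x_i^d equals d^{n+m-1} · n / (n+m−1)!. -/

import Mathlib

open Sum

/-- The vertex `P_i = d·e_{u_i}` of the Newton polytope of `f_a`. -/
def Ppt (n m d : ℕ) (i : Fin (n - 1)) : Fin (n - 1) ⊕ Fin m → ℝ :=
  fun k => if k = Sum.inl i then (d : ℝ) else 0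

/-- The vertex `Q_j = d·e_{v_j}` of the Newton polytope of `f_a`. -/
def Qpt (n m d : ℕ) (j : Fin m) : Fin (n - 1) ⊕ Fin m → ℝ :=
  fun k => if k = Sum.inr j then (d : ℝ) else 0

/-- The vertex `R` (all `u`-coordinates `-d`, all `v`-coordinates `d`). -/
def Rpt (n m d : ℕ) : Fin (n - 1) ⊕ Fin m → ℝ :=
  Sum.elim (fun _ => -(d : ℝ)) (fun _ => (d : ℝ))

/-- The Newton polytope `Δ(f_a)`: convex hull of `0`, the `P_i`, the `Q_j` and `R`. -/
def NPolytope (n m d : ℕ) : Set (Fin (n - 1) ⊕ Fin m → ℝ) :=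
  convexHull ℝ
    (insert 0 (insert (Rpt n m d) (Set.range (Ppt n m d) ∪ Set.range (Qpt n m d))))

namespace Stmt5Aux

open MeasureTheory Set

/-! ### Volume of the corner simplex -/

def cornerS (ι : Type*) [Fintype ι] (c : ℝ) : Set (ι → ℝ) :=
  {x | (∀ i, 0 ≤ x i) ∧ ∑ i, x i ≤ c}

lemma isClosed_cornerS (ι : Type*) [Fintype ι] (c : ℝ) : IsClosed (cornerS ι c) := by
  have h1 : IsClosed {x : ι → ℝ | ∀ i, 0 ≤ x i} := by
    have : {x : ι → ℝ | ∀ i, 0 ≤ x i} = ⋂ i, {x | 0 ≤ x i} := by ext x; simp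
    rw [this]
    exact isClosed_iInter fun i => isClosed_le continuous_const (continuous_apply i)
  have h2 : IsClosed {x : ι → ℝ | ∑ i, x i ≤ c} :=
    isClosed_le (by continuity) continuous_const
  exact h1.inter h2

lemma cornerS_empty (ι : Type*) [Fintype ι] {c : ℝ} (hc : c < 0) : cornerS ι c = ∅ := by
  ext x
  simp only [cornerS, mem_setOf_eq, mem_empty_iff_false, iff_false, not_and, not_le]
  intro hx
  exact lt_of_lt_of_le hc (Finset.sum_nonneg fun i _ => hx i)

lemma vol_cornerS_fin : ∀ (N : ℕ) (c : ℝ), 0 ≤ c →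
    volume (cornerS (Fin N) c) = ENNReal.ofReal (c ^ N / (Nat.factorial N)) := by
  intro N
  induction N with
  | zero =>
    intro c hc
    have h : cornerS (Fin 0) c = univ := by ext x; simp [cornerS, hc]
    rw [h]
    simp [MeasureTheory.volume_pi, MeasureTheory.Measure.pi_univ]
  | succ N ih =>
    intro c hc
    set s : Set (ℝ × (Fin N → ℝ)) :=
      {p | 0 ≤ p.1 ∧ (∀ i, 0 ≤ p.2 i) ∧ p.1 + ∑ i, p.2 i ≤ c} with hs_def
    have hs_closed : IsClosed s := by
      have e1 : IsClosed {p : ℝ × (Fin N → ℝ) | 0 ≤ p.1} :=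
        isClosed_le continuous_const continuous_fst
      have e2 : IsClosed {p : ℝ × (Fin N → ℝ) | ∀ i, 0 ≤ p.2 i} := by
        have h : {p : ℝ × (Fin N → ℝ) | ∀ i, 0 ≤ p.2 i} = ⋂ i, {p | 0 ≤ p.2 i} := by ext x; simp
        rw [h]
        exact isClosed_iInter fun i =>
          isClosed_le continuous_const ((continuous_apply i).comp continuous_snd)
      have e3 : IsClosed {p : ℝ × (Fin N → ℝ) | p.1 + ∑ i, p.2 i ≤ c} :=
        isClosed_le (continuous_fst.add
          (continuous_finset_sum _ fun i _ => (continuous_apply i).comp continuous_snd))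
          continuous_const
      have : s = {p : ℝ × (Fin N → ℝ) | 0 ≤ p.1}
          ∩ ({p | ∀ i, 0 ≤ p.2 i} ∩ {p | p.1 + ∑ i, p.2 i ≤ c}) := by
        ext p; simp [hs_def, and_assoc]
      rw [this]
      exact e1.inter (e2.inter e3)
    have hpre : cornerS (Fin (N+1)) c
        = (MeasurableEquiv.piFinSuccAbove (fun _ => ℝ) 0) ⁻¹' s := by
      ext x
      have he : (MeasurableEquiv.piFinSuccAbove (fun _ => ℝ) 0) x = (x 0, fun i => x i.succ) := by
        rfl
      simp only [mem_preimage, he, cornerS, hs_def, mem_setOf_eq]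
      constructor
      · rintro ⟨h1, h2⟩
        exact ⟨h1 0, fun i => h1 i.succ, by rwa [← Fin.sum_univ_succ]⟩
      · rintro ⟨h1, h2, h3⟩
        refine ⟨fun i => ?_, by rwa [Fin.sum_univ_succ]⟩
        rcases Fin.eq_zero_or_eq_succ i with h | ⟨j, rfl⟩
        · rwa [h]
        · exact h2 j
    rw [hpre, (volume_preserving_piFinSuccAbove (fun _ : Fin (N+1) => ℝ) 0).measure_preimage
      hs_closed.measurableSet.nullMeasurableSet]
    rw [MeasureTheory.Measure.volume_eq_prod, Measure.prod_apply hs_closed.measurableSet]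
    have hsec : ∀ t : ℝ, volume (Prod.mk t ⁻¹' s)
        = (Icc 0 c).indicator (fun t => ENNReal.ofReal ((c - t) ^ N / (Nat.factorial N))) t := by
      intro t
      have hps : Prod.mk t ⁻¹' s = if 0 ≤ t then cornerS (Fin N) (c - t) else ∅ := by
        split_ifs with ht
        · ext y
          simp only [mem_preimage, hs_def, mem_setOf_eq, cornerS, ht, true_and]
          constructor
          · rintro ⟨h1, h2⟩; exact ⟨h1, by linarith⟩
          · rintro ⟨h1, h2⟩; exact ⟨h1, by linarith⟩
        · ext y; simp [hs_def, cornerS, ht]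
      rw [hps]
      rcases le_or_gt 0 t with ht | ht
      · rw [if_pos ht]
        rcases le_or_gt t c with htc | htc
        · rw [indicator_of_mem (mem_Icc.2 ⟨ht, htc⟩), ih _ (by linarith)]
        · rw [cornerS_empty _ (by linarith), indicator_of_notMem (by simp [htc.not_ge]),
            measure_empty]
      · rw [if_neg ht.not_ge, indicator_of_notMem (by simp [ht.not_ge]), measure_empty]
    simp_rw [hsec]
    rw [lintegral_indicator measurableSet_Icc]
    have hcont : Continuous (fun t : ℝ => (c - t) ^ N / (Nat.factorial N)) := by continuity
    rw [← MeasureTheory.ofReal_integral_eq_lintegral_ofReal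
      (hcont.integrableOn_Icc)
      ((ae_restrict_iff' measurableSet_Icc).2 (Filter.Eventually.of_forall fun t ht =>
        div_nonneg (pow_nonneg (by linarith [ht.2]) _) (by positivity)))]
    congr 1
    rw [MeasureTheory.integral_Icc_eq_integral_Ioc, ← intervalIntegral.integral_of_le hc]
    rw [intervalIntegral.integral_div]
    have : ∫ t in (0:ℝ)..c, (c - t) ^ N = c ^ (N+1) / (N+1) := by
      rw [intervalIntegral.integral_comp_sub_left (fun x => x ^ N) c]
      simp [integral_pow]
    rw [this, Nat.factorial_succ]
    push_cast
    field_simp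

lemma vol_cornerS (ι : Type*) [Fintype ι] :
    volume (cornerS ι 1) = ENNReal.ofReal (1 / (Nat.factorial (Fintype.card ι))) := by
  classical
  set N := Fintype.card ι
  set f : Fin N ≃ ι := (Fintype.equivFin ι).symm
  set φ := MeasurableEquiv.piCongrLeft (fun _ : ι => ℝ) f
  have hφ : MeasurePreserving φ :=
    volume_measurePreserving_piCongrLeft (fun _ : ι => ℝ) f
  have hpre : φ ⁻¹' (cornerS ι 1) = cornerS (Fin N) 1 := by
    ext y
    have happ : ∀ i' : Fin N, φ y (f i') = y i' := fun i' =>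
      Equiv.piCongrLeft_apply_apply (fun _ : ι => ℝ) f y i'
    simp only [mem_preimage, cornerS, mem_setOf_eq]
    constructor
    · rintro ⟨h1, h2⟩
      refine ⟨fun i' => by rw [← happ i']; exact h1 _, ?_⟩
      rwa [← Equiv.sum_comp f (fun i => φ y i), Finset.sum_congr rfl fun i' _ => happ i'] at h2
    · rintro ⟨h1, h2⟩
      constructor
      · intro i
        have := h1 (f.symm i)
        rwa [← happ (f.symm i), f.apply_symm_apply] at this
      · rwa [← Equiv.sum_comp f (fun i => φ y i), Finset.sum_congr rfl fun i' _ => happ i']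
  rw [← hφ.measure_preimage (isClosed_cornerS ι 1).measurableSet.nullMeasurableSet, hpre,
    vol_cornerS_fin N 1 zero_le_one, one_pow]

lemma convex_cornerS (ι : Type*) [Fintype ι] (c : ℝ) : Convex ℝ (cornerS ι c) := by
  have h : cornerS ι c = {x : ι → ℝ | ∀ i, 0 ≤ x i} ∩ {x | ∑ i, x i ≤ c} := by
    ext x; simp [cornerS]
  rw [h]
  refine Convex.inter ?_ (convex_halfSpace_le ⟨fun x y => by simp [Finset.sum_add_distrib],
    fun r x => by simp [Finset.mul_sum]⟩ c)
  have h2 : {x : ι → ℝ | ∀ i, 0 ≤ x i} = Set.pi univ (fun _ => Ici (0:ℝ)) := by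
    ext x; simp [Pi.le_def]
  rw [h2]
  exact convex_pi fun i _ => convex_Ici 0

lemma corner_eq_convexHull (ι : Type*) [Fintype ι] [DecidableEq ι] :
    convexHull ℝ (insert 0 (Set.range fun i => (Pi.single i 1 : ι → ℝ))) = cornerS ι 1 := by
  apply Subset.antisymm
  · apply convexHull_min _ (convex_cornerS ι 1)
    rintro x (rfl | ⟨i, rfl⟩)
    · exact ⟨fun i => le_refl 0, by simp⟩
    · refine ⟨fun j => ?_, ?_⟩
      · simp only [Pi.single_apply]; split <;> norm_num
      · simp [Pi.single_apply]
  · intro x hx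
    obtain ⟨hx0, hx1⟩ := hx
    apply mem_convexHull_of_exists_fintype (ι := Option ι)
      (fun o => Option.elim o (1 - ∑ i, x i) x)
      (fun o => Option.elim o 0 (fun i => Pi.single i 1))
    · rintro (_ | i)
      · simpa using hx1
      · exact hx0 i
    · rw [Fintype.sum_option]; simp
    · rintro (_ | i)
      · exact mem_insert _ _
      · exact mem_insert_of_mem _ ⟨i, rfl⟩
    · rw [Fintype.sum_option]
      simp only [Option.elim, smul_zero, zero_add]
      have : ∀ i, x i • (Pi.single i 1 : ι → ℝ) = Pi.single i (x i) := by
        intro i; ext j; simp [Pi.single_apply, mul_ite]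
      simp_rw [this]
      exact Finset.univ_sum_single x

/-! ### Volume of a simplex with a vertex at the origin -/

lemma vol_simplex {ι : Type*} [Fintype ι] [DecidableEq ι] (w : ι → ι → ℝ) :
    volume (convexHull ℝ (insert 0 (Set.range w)))
      = ENNReal.ofReal (|(Matrix.of w).det| / (Nat.factorial (Fintype.card ι))) := by
  set L := Matrix.toLin' (Matrix.transpose (Matrix.of w)) with hL
  have hLs : ∀ i, L (Pi.single i 1) = w i := by
    intro i
    rw [hL, Matrix.toLin'_apply, Matrix.mulVec_single]
    ext j; simp
  have himg : insert 0 (Set.range w)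
      = L '' (insert 0 (Set.range fun i => (Pi.single i 1 : ι → ℝ))) := by
    rw [image_insert_eq, map_zero, ← Set.range_comp]
    congr 1
    ext x
    constructor
    · rintro ⟨i, rfl⟩; exact ⟨i, hLs i⟩
    · rintro ⟨i, rfl⟩; exact ⟨i, (hLs i).symm⟩
  rw [himg, ← L.image_convexHull, MeasureTheory.Measure.addHaar_image_linearMap volume L,
    corner_eq_convexHull, vol_cornerS, hL, LinearMap.det_toLin', Matrix.det_transpose,
    ← ENNReal.ofReal_mul (abs_nonneg _)]
  congr 1
  rw [mul_one_div]

lemma det_updateRow_one {ι : Type*} [Fintype ι] [DecidableEq ι] (i : ι) (b : ι → ℝ) :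
    (Matrix.updateRow (1 : Matrix ι ι ℝ) i b).det = b i := by
  have h := Matrix.cramer_transpose_apply (1 : Matrix ι ι ℝ) b i
  rw [Matrix.transpose_one, Matrix.cramer_one] at h
  rw [← h]; rfl

/-! ### The decomposition of the Newton polytope -/

variable (n m d : ℕ)

abbrev Idx := Fin (n - 1) ⊕ Fin m

def Apt (k : Idx n m) : Idx n m → ℝ := fun j => if j = k then (d : ℝ) else 0

def wFam : Option (Fin (n - 1)) → Idx n m → (Idx n m → ℝ)
  | none => Apt n m d
  | some u => fun k => if k = Sum.inl u then Rpt n m d else Apt n m d k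

def SimpO (o : Option (Fin (n - 1))) : Set (Idx n m → ℝ) :=
  convexHull ℝ (insert 0 (Set.range (wFam n m d o)))

lemma gen_eq : insert 0 (insert (Rpt n m d) (Set.range (Ppt n m d) ∪ Set.range (Qpt n m d)))
    = insert (0 : Idx n m → ℝ) (insert (Rpt n m d) (Set.range (Apt n m d))) := by
  congr 1
  congr 1
  ext x
  constructor
  · rintro (⟨i, rfl⟩ | ⟨j, rfl⟩)
    · exact ⟨Sum.inl i, rfl⟩
    · exact ⟨Sum.inr j, rfl⟩
  · rintro ⟨(i | j), rfl⟩
    · exact Or.inl ⟨i, rfl⟩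
    · exact Or.inr ⟨j, rfl⟩

lemma simpO_subset (o : Option (Fin (n - 1))) : SimpO n m d o ⊆ NPolytope n m d := by
  rw [NPolytope, gen_eq]
  apply convexHull_mono
  intro x hx
  rcases hx with rfl | ⟨k, rfl⟩
  · exact mem_insert _ _
  · cases o with
    | none => exact mem_insert_of_mem _ (mem_insert_of_mem _ ⟨k, rfl⟩)
    | some u =>
      simp only [wFam]
      split_ifs with h
      · exact mem_insert_of_mem _ (mem_insert _ _)
      · exact mem_insert_of_mem _ (mem_insert_of_mem _ ⟨k, rfl⟩)

lemma card_Idx : Fintype.card (Idx n m) = (n - 1) + m := by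
  simp

/-! ### Determinants -/

lemma matrix_none : Matrix.of (Apt n m d) = (d : ℝ) • (1 : Matrix (Idx n m) (Idx n m) ℝ) := by
  ext k j
  simp only [Matrix.of_apply, Apt, Matrix.smul_apply, Matrix.one_apply, smul_eq_mul]
  rcases eq_or_ne k j with rfl | h
  · simp
  · simp [h, Ne.symm h]

lemma det_none : (Matrix.of (Apt n m d)).det = (d : ℝ) ^ ((n-1) + m) := by
  rw [matrix_none, Matrix.det_smul, Matrix.det_one, mul_one, card_Idx]

lemma matrix_some (u : Fin (n-1)) : Matrix.of (wFam n m d (some u))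
    = Matrix.updateRow ((d : ℝ) • (1 : Matrix (Idx n m) (Idx n m) ℝ)) (Sum.inl u)
      (Rpt n m d) := by
  rw [← matrix_none]
  ext k j
  rw [Matrix.updateRow_apply]
  simp only [Matrix.of_apply, wFam]
  split_ifs <;> rfl

lemma det_some (u : Fin (n-1)) :
    (Matrix.of (wFam n m d (some u))).det = (d : ℝ) ^ ((n-1) + m - 1) * (-(d:ℝ)) := by
  rw [matrix_some, Matrix.det_updateRow_smul_left, det_updateRow_one, card_Idx]
  rfl

/-! ### Volume of each simplex -/

lemma vol_simpO (hnm : m < n) (o : Option (Fin (n - 1))) :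
    volume (SimpO n m d o)
      = ENNReal.ofReal ((d : ℝ) ^ ((n-1) + m) / (Nat.factorial ((n-1) + m))) := by
  classical
  rw [SimpO, vol_simplex (wFam n m d o), card_Idx]
  congr 2
  cases o with
  | none =>
    rw [show wFam n m d none = Apt n m d from rfl, det_none, abs_of_nonneg (by positivity)]
  | some u =>
    rw [det_some, abs_mul, abs_neg, abs_of_nonneg (by positivity : (0:ℝ) ≤ (d:ℝ)^((n-1)+m-1)),
      abs_of_nonneg (by positivity : (0:ℝ) ≤ (d:ℝ))]
    rw [← pow_succ]
    congr 1
    have : 1 ≤ n - 1 := by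
      rcases u with ⟨i, hi⟩
      omega
    omega

/-! ### The H-description superset `Kset` -/

def Kset : Set (Idx n m → ℝ) :=
  {x | (∀ v, 0 ≤ x (Sum.inr v)) ∧ (∀ u v, 0 ≤ x (Sum.inl u) + x (Sum.inr v)) ∧
       (∑ k, x k ≤ (d:ℝ)) ∧ ∀ u, ∑ k, x k + ((m:ℝ) - (n:ℝ)) * x (Sum.inl u) ≤ (d:ℝ)}

lemma convex_Kset : Convex ℝ (Kset n m d) := by
  have h : Kset n m d =
      (⋂ v, {x : Idx n m → ℝ | 0 ≤ x (Sum.inr v)}) ∩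
      ((⋂ u, ⋂ v, {x : Idx n m → ℝ | 0 ≤ x (Sum.inl u) + x (Sum.inr v)}) ∩
       ({x : Idx n m → ℝ | ∑ k, x k ≤ (d:ℝ)} ∩
        (⋂ u, {x : Idx n m → ℝ | ∑ k, x k + ((m:ℝ) - (n:ℝ)) * x (Sum.inl u) ≤ (d:ℝ)}))) := by
    ext x
    simp only [Kset, mem_setOf_eq, mem_inter_iff, mem_iInter]
  rw [h]
  refine Convex.inter (convex_iInter fun v => convex_halfSpace_ge ⟨fun a b => rfl,
      fun r a => rfl⟩ 0)
    (Convex.inter (convex_iInter fun u => convex_iInter fun v =>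
        convex_halfSpace_ge ⟨fun a b => by simp only [Pi.add_apply]; ring,
          fun r a => by simp only [Pi.smul_apply, smul_eq_mul]; ring⟩ 0)
      (Convex.inter (convex_halfSpace_le
          ⟨fun a b => by simp only [Pi.add_apply]; rw [Finset.sum_add_distrib],
           fun r a => by simp only [Pi.smul_apply, smul_eq_mul]; rw [Finset.mul_sum]⟩ _)
        (convex_iInter fun u => convex_halfSpace_le
          ⟨fun a b => by simp only [Pi.add_apply, Finset.sum_add_distrib]; ring,
           fun r a => by simp only [Pi.smul_apply, smul_eq_mul, mul_add, Finset.mul_sum]; ring⟩ _)))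

lemma sum_Rpt (hn : 1 ≤ n) :
    ∑ k, Rpt n m d k = -(((n:ℝ) - 1) * d) + (m:ℝ) * d := by
  rw [Fintype.sum_sum_type]
  simp only [Rpt, Sum.elim_inl, Sum.elim_inr, Finset.sum_const, Finset.card_univ,
    Fintype.card_fin, nsmul_eq_mul]
  have : ((n - 1 : ℕ) : ℝ) = (n:ℝ) - 1 := by
    rw [Nat.cast_sub hn, Nat.cast_one]
  rw [this]
  ring

lemma sum_Apt (k : Idx n m) : ∑ j, Apt n m d k j = (d:ℝ) := by
  simp only [Apt]
  rw [Finset.sum_ite_eq' Finset.univ k (fun _ => (d:ℝ))]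
  simp

lemma gen_subset_Kset (hnm : m < n) :
    insert (0 : Idx n m → ℝ) (insert (Rpt n m d) (Set.range (Apt n m d))) ⊆ Kset n m d := by
  have hn : 1 ≤ n := Nat.one_le_of_lt (Nat.lt_of_le_of_lt (Nat.zero_le m) hnm)
  have hd0 : (0:ℝ) ≤ (d:ℝ) := Nat.cast_nonneg d
  have hmn : (m:ℝ) ≤ (n:ℝ) - 1 := by
    have : (m:ℝ) + 1 ≤ (n:ℝ) := by exact_mod_cast hnm
    linarith
  rintro x (rfl | rfl | ⟨k, rfl⟩)
  · refine ⟨fun v => le_refl 0, fun u v => by simp, by simp [hd0], fun u => by simp [hd0]⟩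
  · refine ⟨fun v => hd0, fun u v => by simp [Rpt], ?_, ?_⟩
    · rw [sum_Rpt n m d hn]
      nlinarith
    · intro u
      rw [sum_Rpt n m d hn]
      simp only [Rpt, Sum.elim_inl]
      nlinarith
  · refine ⟨fun v => ?_, fun u v => ?_, ?_, ?_⟩
    · simp only [Apt]; split <;> simp [hd0]
    · simp only [Apt]
      have h1 : (0:ℝ) ≤ (if (Sum.inl u : Idx n m) = k then (d:ℝ) else 0) := by
        split <;> simp [hd0]
      have h2 : (0:ℝ) ≤ (if (Sum.inr v : Idx n m) = k then (d:ℝ) else 0) := by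
        split <;> simp [hd0]
      linarith
    · rw [sum_Apt]
    · intro u
      rw [sum_Apt]
      simp only [Apt]
      split
      · nlinarith
      · simp [hd0]

lemma Kset_subset_iUnion (hnm : m < n) (hd : 1 ≤ d) :
    Kset n m d ⊆ ⋃ o, SimpO n m d o := by
  classical
  intro x hx
  obtain ⟨hv, huv, hsum, hslack⟩ := hx
  have hd0 : (0:ℝ) < (d:ℝ) := by exact_mod_cast hd
  have hn : 1 ≤ n := Nat.one_le_of_lt (Nat.lt_of_le_of_lt (Nat.zero_le m) hnm)
  by_cases hcase : ∀ u, 0 ≤ x (Sum.inl u)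
  · refine mem_iUnion.2 ⟨none, ?_⟩
    apply mem_convexHull_of_exists_fintype (ι := Option (Idx n m))
      (fun o => Option.elim o (1 - (∑ k, x k)/(d:ℝ)) (fun k => x k / (d:ℝ)))
      (fun o => Option.elim o 0 (wFam n m d none))
    · rintro (_ | k)
      · simp only [Option.elim]
        rw [sub_nonneg, div_le_one hd0]
        exact hsum
      · rcases k with u | v
        · exact div_nonneg (hcase u) hd0.le
        · exact div_nonneg (hv v) hd0.le
    · rw [Fintype.sum_option]
      simp only [Option.elim]
      rw [← Finset.sum_div]
      ring
    · rintro (_ | k)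
      · exact mem_insert _ _
      · exact mem_insert_of_mem _ ⟨k, rfl⟩
    · rw [Fintype.sum_option]
      simp only [Option.elim, smul_zero, zero_add]
      funext j
      rw [Finset.sum_apply]
      have hterm : ∀ k, ((x k / (d:ℝ)) • wFam n m d none k) j = if j = k then x k else 0 := by
        intro k
        show x k / (d:ℝ) * (if j = k then (d:ℝ) else 0) = _
        split
        · field_simp
        · simp
      rw [Finset.sum_congr rfl (fun k _ => hterm k),
        Finset.sum_ite_eq Finset.univ j (fun k => x k)]
      simp
  · push_neg at hcase
    obtain ⟨u1, hu1⟩ := hcase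
    obtain ⟨u₀, -, hmin⟩ := Finset.exists_min_image Finset.univ (fun u => x (Sum.inl u))
      ⟨u1, Finset.mem_univ u1⟩
    have hmin' : ∀ u, x (Sum.inl u₀) ≤ x (Sum.inl u) := fun u => hmin u (Finset.mem_univ u)
    have hx0 : x (Sum.inl u₀) ≤ 0 := le_of_lt (lt_of_le_of_lt (hmin' u1) hu1)
    set x₀ := x (Sum.inl u₀) with hx₀def
    set εx : Idx n m → ℝ := Sum.elim (fun _ => x₀) (fun _ => -x₀) with hεx
    refine mem_iUnion.2 ⟨some u₀, ?_⟩
    set wt : Option (Idx n m) → ℝ := fun o => Option.elim o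
      (1 - (∑ k, x k + ((m:ℝ) - (n:ℝ)) * x₀)/(d:ℝ))
      (fun k => (if k = Sum.inl u₀ then -x₀ else x k - εx k)/(d:ℝ)) with hwt
    have hsum_num : ∑ k, (if k = Sum.inl u₀ then -x₀ else x k - εx k)
        = ∑ k, x k + ((m:ℝ) - (n:ℝ)) * x₀ := by
      have hupd : (fun k => if k = Sum.inl u₀ then -x₀ else x k - εx k)
          = Function.update (fun k => x k - εx k) (Sum.inl u₀) (-x₀) := by
        funext k
        rw [Function.update_apply]
      rw [hupd, Finset.sum_update_of_mem (Finset.mem_univ _), ← Finset.erase_eq,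
        Finset.sum_erase_eq_sub (Finset.mem_univ _)]
      have hεsum : ∑ k, εx k = ((n:ℝ) - 1) * x₀ - (m:ℝ) * x₀ := by
        rw [hεx, Fintype.sum_sum_type]
        simp only [Sum.elim_inl, Sum.elim_inr, Finset.sum_const, Finset.card_univ,
          Fintype.card_fin, nsmul_eq_mul]
        have : ((n - 1 : ℕ) : ℝ) = (n:ℝ) - 1 := by
          rw [Nat.cast_sub hn, Nat.cast_one]
        rw [this]
        ring
      have h1 : ∑ k, (x k - εx k) = ∑ k, x k - (((n:ℝ) - 1) * x₀ - (m:ℝ) * x₀) := by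
        rw [Finset.sum_sub_distrib, hεsum]
      have h2 : εx (Sum.inl u₀) = x₀ := rfl
      rw [h1, h2]
      ring
    apply mem_convexHull_of_exists_fintype (ι := Option (Idx n m)) wt
      (fun o => Option.elim o 0 (wFam n m d (some u₀)))
    · rintro (_ | k)
      · simp only [hwt, Option.elim]
        rw [sub_nonneg, div_le_one hd0]
        exact hslack u₀
      · simp only [hwt, Option.elim]
        apply div_nonneg _ hd0.le
        rcases k with u | v
        · rcases eq_or_ne (Sum.inl u : Idx n m) (Sum.inl u₀) with h | h
          · rw [if_pos h]; linarith
          · rw [if_neg h]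
            simp only [hεx, Sum.elim_inl]
            have := hmin' u
            linarith
        · rw [if_neg (by simp)]
          simp only [hεx, Sum.elim_inr]
          have := huv u₀ v
          linarith
    · rw [Fintype.sum_option]
      simp only [hwt, Option.elim]
      rw [← Finset.sum_div, hsum_num]
      field_simp
      ring
    · rintro (_ | k)
      · exact mem_insert _ _
      · exact mem_insert_of_mem _ ⟨k, rfl⟩
    · rw [Fintype.sum_option]
      simp only [Option.elim, smul_zero, zero_add]
      funext j
      rw [Finset.sum_apply]
      have hz : ∀ k, (wFam n m d (some u₀) k) j
          = if k = Sum.inl u₀ then Rpt n m d j else (if j = k then (d:ℝ) else 0) := by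
        intro k
        simp only [wFam, Apt]
        split <;> rfl
      have hterm : ∀ k, (wt (some k) • wFam n m d (some u₀) k) j
          = Function.update (fun k => wt (some k) * (if j = k then (d:ℝ) else 0)) (Sum.inl u₀)
              (wt (some (Sum.inl u₀)) * Rpt n m d j) k := by
        intro k
        rw [Function.update_apply]
        show wt (some k) * (wFam n m d (some u₀) k) j = _
        rw [hz k, mul_ite]
        by_cases h : k = Sum.inl u₀
        · rw [if_pos h, if_pos h, h]
        · rw [if_neg h, if_neg h]
      rw [Finset.sum_congr rfl (fun k _ => hterm k),
        Finset.sum_update_of_mem (Finset.mem_univ _), ← Finset.erase_eq,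
        Finset.sum_erase_eq_sub (Finset.mem_univ _)]
      have hF : ∑ k, wt (some k) * (if j = k then (d:ℝ) else 0) = wt (some j) * d := by
        have : ∀ k, wt (some k) * (if j = k then (d:ℝ) else 0)
            = if j = k then wt (some k) * d else 0 := by
          intro k; split <;> simp
        rw [Finset.sum_congr rfl (fun k _ => this k),
          Finset.sum_ite_eq Finset.univ j (fun k => wt (some k) * d)]
        simp
      rw [hF]
      rcases eq_or_ne j (Sum.inl u₀) with rfl | hj
      · have : wt (some (Sum.inl u₀)) = -x₀ / d := by simp [hwt]
        rw [if_pos rfl, this]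
        show -x₀ / d * (Rpt n m d (Sum.inl u₀)) + (-x₀/d * d - -x₀/d * d) = x (Sum.inl u₀)
        have hR : Rpt n m d (Sum.inl u₀) = -(d:ℝ) := rfl
        rw [hR]
        field_simp
        ring
      · rw [if_neg hj, mul_zero, sub_zero]
        have hwtj : wt (some j) = (x j - εx j)/d := by
          simp only [hwt, Option.elim]
          rw [if_neg hj]
        have hwtu : wt (some (Sum.inl u₀)) = -x₀ / d := by simp [hwt]
        rw [hwtj, hwtu]
        rcases j with u | v
        · have hR : Rpt n m d (Sum.inl u) = -(d:ℝ) := rfl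
          have hε : εx (Sum.inl u) = x₀ := rfl
          rw [hR, hε]
          field_simp
          ring
        · have hR : Rpt n m d (Sum.inr v) = (d:ℝ) := rfl
          have hε : εx (Sum.inr v) = -x₀ := rfl
          rw [hR, hε]
          field_simp
          ring

lemma NPolytope_eq_iUnion (hnm : m < n) (hd : 1 ≤ d) :
    NPolytope n m d = ⋃ o, SimpO n m d o := by
  apply Subset.antisymm
  · rw [NPolytope, gen_eq]
    intro x hx
    exact Kset_subset_iUnion n m d hnm hd
      (convexHull_min (gen_subset_Kset n m d hnm) (convex_Kset n m d) hx)
  · exact iUnion_subset (simpO_subset n m d)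

/-! ### Almost-everywhere disjointness -/

lemma simpO_none_subset (u : Fin (n-1)) :
    SimpO n m d none ⊆ {x : Idx n m → ℝ | 0 ≤ x (Sum.inl u)} := by
  apply convexHull_min _ (convex_halfSpace_ge ⟨fun a b => rfl, fun r a => rfl⟩ 0)
  rintro x (rfl | ⟨k, rfl⟩)
  · show (0:ℝ) ≤ (0 : Idx n m → ℝ) (Sum.inl u)
    simp
  · show (0:ℝ) ≤ Apt n m d k (Sum.inl u)
    simp only [Apt]
    split <;> simp

lemma simpO_some_subset (u : Fin (n-1)) :
    SimpO n m d (some u) ⊆ {x : Idx n m → ℝ | x (Sum.inl u) ≤ 0} := by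
  apply convexHull_min _ (convex_halfSpace_le ⟨fun a b => rfl, fun r a => rfl⟩ 0)
  rintro x (rfl | ⟨k, rfl⟩)
  · show (0 : Idx n m → ℝ) (Sum.inl u) ≤ 0
    simp
  · show (wFam n m d (some u) k) (Sum.inl u) ≤ 0
    simp only [wFam]
    split_ifs with h
    · show -(d:ℝ) ≤ 0
      simp
    · show (if (Sum.inl u : Idx n m) = k then (d:ℝ) else 0) ≤ 0
      rw [if_neg (fun hh => h hh.symm)]

lemma simpO_some_subset' {u u' : Fin (n-1)} (h : u ≠ u') :
    SimpO n m d (some u) ⊆ {x : Idx n m → ℝ | x (Sum.inl u) ≤ x (Sum.inl u')} := by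
  have hset : {x : Idx n m → ℝ | x (Sum.inl u) ≤ x (Sum.inl u')}
      = {x : Idx n m → ℝ | x (Sum.inl u) - x (Sum.inl u') ≤ 0} := by
    ext x; simp [sub_nonpos]
  rw [hset]
  apply convexHull_min _ (convex_halfSpace_le
    ⟨fun a b => by simp only [Pi.add_apply]; ring,
     fun r a => by simp only [Pi.smul_apply, smul_eq_mul]; ring⟩ 0)
  rintro x (rfl | ⟨k, rfl⟩)
  · show (0 : Idx n m → ℝ) (Sum.inl u) - (0 : Idx n m → ℝ) (Sum.inl u') ≤ 0
    simp
  · show (wFam n m d (some u) k) (Sum.inl u) - (wFam n m d (some u) k) (Sum.inl u') ≤ 0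
    simp only [wFam]
    split_ifs with hk
    · show -(d:ℝ) - Rpt n m d (Sum.inl u') ≤ 0
      show -(d:ℝ) - (-(d:ℝ)) ≤ 0
      simp
    · show (if (Sum.inl u : Idx n m) = k then (d:ℝ) else 0)
          - (if (Sum.inl u' : Idx n m) = k then (d:ℝ) else 0) ≤ 0
      rw [if_neg (fun hh => hk hh.symm)]
      have : (0:ℝ) ≤ (if (Sum.inl u' : Idx n m) = k then (d:ℝ) else 0) := by
        split <;> simp
      linarith

/-! ### Null intersections -/

lemma hyperplane_zero_null (u : Fin (n-1)) :
    volume {x : Idx n m → ℝ | x (Sum.inl u) = 0} = 0 := by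
  have h : {x : Idx n m → ℝ | x (Sum.inl u) = 0}
      = ((LinearMap.ker (LinearMap.proj (Sum.inl u) : (Idx n m → ℝ) →ₗ[ℝ] ℝ)) :
          Set (Idx n m → ℝ)) := by
    ext x; simp [LinearMap.mem_ker]
  rw [h]
  apply MeasureTheory.Measure.addHaar_submodule
  intro htop
  have hmem : (Pi.single (Sum.inl u) 1 : Idx n m → ℝ)
      ∈ LinearMap.ker (LinearMap.proj (Sum.inl u) : (Idx n m → ℝ) →ₗ[ℝ] ℝ) :=
    htop ▸ Submodule.mem_top
  simp [LinearMap.mem_ker] at hmem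

lemma hyperplane_diff_null {u u' : Fin (n-1)} (h : u ≠ u') :
    volume {x : Idx n m → ℝ | x (Sum.inl u) = x (Sum.inl u')} = 0 := by
  classical
  set f : (Idx n m → ℝ) →ₗ[ℝ] ℝ :=
    (LinearMap.proj (Sum.inl u) : (Idx n m → ℝ) →ₗ[ℝ] ℝ)
      - (LinearMap.proj (Sum.inl u') : (Idx n m → ℝ) →ₗ[ℝ] ℝ) with hf
  have hset : {x : Idx n m → ℝ | x (Sum.inl u) = x (Sum.inl u')}
      = ((LinearMap.ker f) : Set (Idx n m → ℝ)) := by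
    ext x
    simp [hf, LinearMap.mem_ker, sub_eq_zero]
  rw [hset]
  apply MeasureTheory.Measure.addHaar_submodule
  intro htop
  have hmem : (Pi.single (Sum.inl u) 1 : Idx n m → ℝ) ∈ LinearMap.ker f :=
    htop ▸ Submodule.mem_top
  have hne : (Sum.inl u' : Idx n m) ≠ Sum.inl u := by
    simp [h.symm]
  simp [hf, LinearMap.mem_ker, Pi.single_eq_of_ne hne] at hmem

lemma simpO_inter_null {o o' : Option (Fin (n-1))} (hne : o ≠ o') :
    volume (SimpO n m d o ∩ SimpO n m d o') = 0 := by
  have key : ∀ u : Fin (n-1),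
      volume (SimpO n m d none ∩ SimpO n m d (some u)) = 0 := by
    intro u
    refine measure_mono_null ?_ (hyperplane_zero_null n m u)
    rintro x ⟨h1, h2⟩
    exact le_antisymm (simpO_some_subset n m d u h2) (simpO_none_subset n m d u h1)
  match o, o', hne with
  | none, none, hne => exact absurd rfl hne
  | none, some u, _ => exact key u
  | some u, none, _ => rw [Set.inter_comm]; exact key u
  | some u, some u', hne =>
    have huu : u ≠ u' := fun h => hne (by rw [h])
    refine measure_mono_null ?_ (hyperplane_diff_null n m huu)
    rintro x ⟨h1, h2⟩
    exact le_antisymm (simpO_some_subset' n m d huu h1)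
      (simpO_some_subset' n m d huu.symm h2)

lemma simpO_nullMeasurable (o : Option (Fin (n-1))) :
    MeasureTheory.NullMeasurableSet (SimpO n m d o) volume := by
  have : IsCompact (SimpO n m d o) :=
    ((Set.finite_range (wFam n m d o)).insert 0).isCompact_convexHull ℝ
  exact this.isClosed.measurableSet.nullMeasurableSet

end Stmt5Aux


/-- for `n > m ≥ 0`, `d ≥ 1`, `a ∈ ℂˣ`, the Euclidean volume of the Newton
polytope `Δ(f_a) ⊂ ℝ^{n+m-1}` equals `d^{n+m-1} · n / (n+m-1)!`. -/
theorem stmt5 (n m d : ℕ) (hnm : m < n) (hd : 1 ≤ d) (a : ℂ) (ha : a ≠ 0) :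
    MeasureTheory.volume (NPolytope n m d)
      = ENNReal.ofReal ((d : ℝ) ^ (n + m - 1) * n / (Nat.factorial (n + m - 1))) := by
  classical
  rw [Stmt5Aux.NPolytope_eq_iUnion n m d hnm hd]
  rw [MeasureTheory.measure_iUnion₀
    (fun o o' h => Stmt5Aux.simpO_inter_null n m d h)
    (Stmt5Aux.simpO_nullMeasurable n m d)]
  rw [tsum_fintype, Fintype.sum_option]
  have hc : (n - 1) + m = n + m - 1 := by omega
  have hvol : ∀ o, MeasureTheory.volume (Stmt5Aux.SimpO n m d o)
      = ENNReal.ofReal ((d : ℝ) ^ (n + m - 1) / (Nat.factorial (n + m - 1))) := by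
    intro o
    rw [Stmt5Aux.vol_simpO n m d hnm o, hc]
  simp_rw [hvol]
  rw [Finset.sum_const, Finset.card_univ, Fintype.card_fin, nsmul_eq_mul]
  have hcast : (1 : ENNReal) + ((n - 1 : ℕ) : ENNReal) = ((n : ℕ) : ENNReal) := by
    rw [← Nat.cast_one, ← Nat.cast_add]
    congr 1
    omega
  have hXn : ENNReal.ofReal ((d : ℝ) ^ (n + m - 1) / (Nat.factorial (n + m - 1)))
        + ((n - 1 : ℕ) : ENNReal)
          * ENNReal.ofReal ((d : ℝ) ^ (n + m - 1) / (Nat.factorial (n + m - 1)))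
      = ((n : ℕ) : ENNReal)
          * ENNReal.ofReal ((d : ℝ) ^ (n + m - 1) / (Nat.factorial (n + m - 1))) := by
    rw [← hcast, add_mul, one_mul]
  rw [hXn, ← ENNReal.ofReal_natCast n, ← ENNReal.ofReal_mul (Nat.cast_nonneg n)]
  congr 1
  ring
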